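/- Let G = (g^{ab}) be a symmetric positive definite real 3×3 matrix and fix q ∈ ℝ³. On the set of p ∈ ℝ³ where h > 0, the functions p ↦ h and p ↦ √s are differentiable with ∂h/∂p_a = (q⁰/h)(p^a/p⁰ − q^a/q⁰) and ∂√s/∂p_a = (q⁰/√s)(p^a/p⁰ − q^a/q⁰), where p^a = g^{ab}p_b. Moreover, there is an absolute constant C such that for every orthonormal frame E for G and every a = 1,2,3, |∂h/∂p_a| ≤ C q⁰ √(p⁰ q⁰) ‖g⁻¹‖ ‖e⁻¹‖ and |∂√s/∂p_a| ≤ C q⁰ √(p⁰ q⁰) ‖g⁻¹‖ ‖e⁻¹‖. -/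

import Mathlib

open Matrix Real

noncomputable section

/-- 3×3 real matrices. -/
abbrev Mat3 := Matrix (Fin 3) (Fin 3) ℝ
/-- Momentum vectors in ℝ³. -/
abbrev V3 := Fin 3 → ℝ

/-- The quadratic form `g^{ab} p_a p_b = pᵀ G p`. -/
def quadG (G : Mat3) (p : V3) : ℝ := p ⬝ᵥ G *ᵥ p

/-- The particle energy `p⁰ = √(1 + g^{ab} p_a p_b)`. -/
def p0 (G : Mat3) (p : V3) : ℝ := Real.sqrt (1 + quadG G p)

/-- The relative momentum `h`. -/
def hrel (G : Mat3) (p q : V3) : ℝ :=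
  Real.sqrt (-(p0 G p - p0 G q) ^ 2 + quadG G (p - q))

/-- `s = (p⁰+q⁰)² − g^{ab}(p_a+q_a)(p_b+q_b)`. -/
def sCM (G : Mat3) (p q : V3) : ℝ :=
  (p0 G p + p0 G q) ^ 2 - quadG G (p + q)

/-- The maximum of the absolute values of the entries of a matrix. -/
def entryNorm (M : Mat3) : ℝ := ⨆ i, ⨆ j, |M i j|

namespace S3

lemma dotsymm {G : Mat3} (hG : G.IsHermitian) (u v : V3) :
    u ⬝ᵥ G *ᵥ v = v ⬝ᵥ G *ᵥ u := by
  have ht : Gᵀ = G := by simpa using hG.eq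
  rw [dotProduct_mulVec, ← mulVec_transpose, ht, dotProduct_comm]

lemma quad_expand {G : Mat3} (hG : G.IsHermitian) (u v : V3) (t : ℝ) :
    quadG G (u + t • v) = quadG G u + t * (2 * (v ⬝ᵥ G *ᵥ u)) + t ^ 2 * quadG G v := by
  simp only [quadG, mulVec_add, mulVec_smul, dotProduct_add, add_dotProduct,
    smul_dotProduct, dotProduct_smul, smul_eq_mul]
  rw [dotsymm hG u v]; ring

lemma quad_nonneg {G : Mat3} (hG : G.PosDef) (p : V3) : 0 ≤ quadG G p := by
  have := hG.posSemidef.dotProduct_mulVec_nonneg p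
  simpa [quadG] using this

lemma one_le_p0 {G : Mat3} (hG : G.PosDef) (p : V3) : 1 ≤ p0 G p := by
  have : Real.sqrt 1 ≤ Real.sqrt (1 + quadG G p) := Real.sqrt_le_sqrt (by linarith [quad_nonneg hG p])
  simpa [p0] using this

lemma p0_pos {G : Mat3} (hG : G.PosDef) (p : V3) : 0 < p0 G p :=
  lt_of_lt_of_le one_pos (one_le_p0 hG p)

lemma p0_sq {G : Mat3} (hG : G.PosDef) (p : V3) : p0 G p ^ 2 = 1 + quadG G p :=
  Real.sq_sqrt (by linarith [quad_nonneg hG p])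

lemma hasDerivAt_poly (A B C : ℝ) :
    HasDerivAt (fun t : ℝ => A + t * B + t ^ 2 * C) B 0 := by
  have h1 : HasDerivAt (fun t : ℝ => t * B) B 0 := by
    simpa using (hasDerivAt_id (0:ℝ)).mul_const B
  have h2 : HasDerivAt (fun t : ℝ => t ^ 2 * C) 0 0 := by
    simpa using (hasDerivAt_pow 2 (0:ℝ)).mul_const C
  exact (((hasDerivAt_const (0:ℝ) A).add h1).add h2).congr_deriv (by simp)

lemma hasDerivAt_quad_line {G : Mat3} (hG : G.IsHermitian) (u e : V3) :
    HasDerivAt (fun t : ℝ => quadG G (u + t • e)) (2 * (e ⬝ᵥ G *ᵥ u)) 0 := by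
  have hfun : (fun t : ℝ => quadG G (u + t • e))
      = fun t : ℝ => quadG G u + t * (2 * (e ⬝ᵥ G *ᵥ u)) + t ^ 2 * quadG G e := by
    funext t; rw [quad_expand hG u e t]
  rw [hfun]; exact hasDerivAt_poly _ _ _

lemma hasDerivAt_p0 {G : Mat3} (hG : G.PosDef) (p e : V3) :
    HasDerivAt (fun t : ℝ => p0 G (p + t • e)) ((e ⬝ᵥ G *ᵥ p) / p0 G p) 0 := by
  have hx : (1 : ℝ) + quadG G p ≠ 0 := by linarith [quad_nonneg hG p]
  have hinner : HasDerivAt (fun t : ℝ => 1 + quadG G (p + t • e)) (2 * (e ⬝ᵥ G *ᵥ p)) 0 :=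
    (hasDerivAt_quad_line hG.isHermitian p e).const_add 1
  have h0ne : (1 : ℝ) + quadG G (p + (0:ℝ) • e) ≠ 0 := by simpa using hx
  have key := (Real.hasDerivAt_sqrt h0ne).comp 0 hinner
  have hfun : (Real.sqrt ∘ fun t : ℝ => 1 + quadG G (p + t • e))
      = fun t : ℝ => p0 G (p + t • e) := by
    funext t; simp [p0, Function.comp]
  rw [hfun] at key
  have hs : Real.sqrt (1 + quadG G p) ≠ 0 := by
    have := p0_pos hG p; rw [p0] at this; exact this.ne'
  have hval : 1 / (2 * Real.sqrt (1 + quadG G (p + (0:ℝ) • e))) * (2 * (e ⬝ᵥ G *ᵥ p))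
      = (e ⬝ᵥ G *ᵥ p) / p0 G p := by
    rw [show p + (0:ℝ) • e = p by simp, p0]
    field_simp
  rwa [hval] at key

lemma vec_shift (p q e : V3) : ∀ t : ℝ, p + t • e - q = (p - q) + t • e := by
  intro t; abel

lemma vec_shift' (p q e : V3) : ∀ t : ℝ, p + t • e + q = (p + q) + t • e := by
  intro t; abel

lemma hasDerivAt_hrel {G : Mat3} (hG : G.PosDef) (p q e : V3) (hpos : 0 < hrel G p q) :
    HasDerivAt (fun t : ℝ => hrel G (p + t • e) q)
      (p0 G q / hrel G p q * ((e ⬝ᵥ G *ᵥ p) / p0 G p - (e ⬝ᵥ G *ᵥ q) / p0 G q)) 0 := by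
  have h1 : HasDerivAt (fun t : ℝ => -(p0 G (p + t • e) - p0 G q) ^ 2)
      (-(2 * (p0 G (p + (0:ℝ) • e) - p0 G q) ^ 1 * ((e ⬝ᵥ G *ᵥ p) / p0 G p))) 0 :=
    (((hasDerivAt_p0 hG p e).sub_const (p0 G q)).pow 2).neg
  have h2 : HasDerivAt (fun t : ℝ => quadG G (p + t • e - q)) (2 * (e ⬝ᵥ G *ᵥ (p - q))) 0 := by
    simp only [vec_shift p q e]
    exact hasDerivAt_quad_line hG.isHermitian (p - q) e
  have hI := h1.add h2
  have hI0 : 0 < -(p0 G p - p0 G q) ^ 2 + quadG G (p - q) := by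
    have := hpos; rw [hrel] at this; exact Real.sqrt_pos.mp this
  have h0ne : (fun t : ℝ => -(p0 G (p + t • e) - p0 G q) ^ 2 + quadG G (p + t • e - q)) 0 ≠ 0 := by
    simpa using hI0.ne'
  have key := (Real.hasDerivAt_sqrt h0ne).comp 0 hI
  have hfun : (Real.sqrt ∘ fun t : ℝ => -(p0 G (p + t • e) - p0 G q) ^ 2 + quadG G (p + t • e - q))
      = fun t : ℝ => hrel G (p + t • e) q := by
    funext t; simp [hrel, Function.comp]
  rw [← hfun]
  refine key.congr_deriv ?_
  have hH : hrel G p q = Real.sqrt (-(p0 G p - p0 G q) ^ 2 + quadG G (p - q)) := rfl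
  simp only [zero_smul, add_zero, pow_one, mulVec_sub, dotProduct_sub, ← hH]
  have hPne : p0 G p ≠ 0 := (p0_pos hG p).ne'
  have hQne : p0 G q ≠ 0 := (p0_pos hG q).ne'
  have hHne : hrel G p q ≠ 0 := hpos.ne'
  field_simp
  ring

lemma s_eq {G : Mat3} (hG : G.PosDef) (p q : V3) :
    sCM G p q = (-(p0 G p - p0 G q) ^ 2 + quadG G (p - q)) + 4 := by
  have h1 : quadG G (p + q) = quadG G p + 2 * (q ⬝ᵥ G *ᵥ p) + quadG G q := by
    have := quad_expand hG.isHermitian p q 1; simpa using this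
  have h2 : quadG G (p - q) = quadG G p - 2 * (q ⬝ᵥ G *ᵥ p) + quadG G q := by
    have := quad_expand hG.isHermitian p q (-1)
    rw [show p + (-1:ℝ) • q = p - q from by simp [sub_eq_add_neg]] at this
    linarith
  rw [sCM]
  nlinarith [p0_sq hG p, p0_sq hG q, h1, h2]

lemma sCM_pos {G : Mat3} (hG : G.PosDef) (p q : V3) (hpos : 0 < hrel G p q) :
    0 < sCM G p q := by
  have hI0 : 0 < -(p0 G p - p0 G q) ^ 2 + quadG G (p - q) := by
    have := hpos; rw [hrel] at this; exact Real.sqrt_pos.mp this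
  rw [s_eq hG p q]; linarith

lemma hrel_le_sqrt_sCM {G : Mat3} (hG : G.PosDef) (p q : V3) :
    hrel G p q ≤ Real.sqrt (sCM G p q) := by
  rw [hrel, s_eq hG p q]
  exact Real.sqrt_le_sqrt (by linarith)

lemma hasDerivAt_sqrt_sCM {G : Mat3} (hG : G.PosDef) (p q e : V3) (hpos : 0 < hrel G p q) :
    HasDerivAt (fun t : ℝ => Real.sqrt (sCM G (p + t • e) q))
      (p0 G q / Real.sqrt (sCM G p q) * ((e ⬝ᵥ G *ᵥ p) / p0 G p - (e ⬝ᵥ G *ᵥ q) / p0 G q)) 0 := by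
  have h1 : HasDerivAt (fun t : ℝ => (p0 G (p + t • e) + p0 G q) ^ 2)
      (2 * (p0 G (p + (0:ℝ) • e) + p0 G q) ^ 1 * ((e ⬝ᵥ G *ᵥ p) / p0 G p)) 0 :=
    ((hasDerivAt_p0 hG p e).add_const (p0 G q)).pow 2
  have h2 : HasDerivAt (fun t : ℝ => quadG G (p + t • e + q)) (2 * (e ⬝ᵥ G *ᵥ (p + q))) 0 := by
    simp only [vec_shift' p q e]
    exact hasDerivAt_quad_line hG.isHermitian (p + q) e
  have hI := h1.sub h2
  have h0ne : (fun t : ℝ => (p0 G (p + t • e) + p0 G q) ^ 2 - quadG G (p + t • e + q)) 0 ≠ 0 := by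
    have := sCM_pos hG p q hpos
    rw [sCM] at this
    simpa using this.ne'
  have key := (Real.hasDerivAt_sqrt h0ne).comp 0 hI
  have hfun : (Real.sqrt ∘ fun t : ℝ => (p0 G (p + t • e) + p0 G q) ^ 2 - quadG G (p + t • e + q))
      = fun t : ℝ => Real.sqrt (sCM G (p + t • e) q) := by
    funext t; simp [sCM, Function.comp]
  rw [← hfun]
  refine key.congr_deriv ?_
  have hS : Real.sqrt (sCM G p q) = Real.sqrt ((p0 G p + p0 G q) ^ 2 - quadG G (p + q)) := rfl
  simp only [zero_smul, add_zero, pow_one, mulVec_add, dotProduct_add, ← hS]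
  have hPne : p0 G p ≠ 0 := (p0_pos hG p).ne'
  have hQne : p0 G q ≠ 0 := (p0_pos hG q).ne'
  have hSne : Real.sqrt (sCM G p q) ≠ 0 := (Real.sqrt_pos.mpr (sCM_pos hG p q hpos)).ne'
  field_simp
  ring



lemma entry_le_entryNorm (M : Mat3) (i j : Fin 3) : |M i j| ≤ entryNorm M := by
  have h1 : |M i j| ≤ ⨆ j', |M i j'| :=
    le_ciSup (f := fun j' => |M i j'|) (Set.finite_range _).bddAbove j
  exact h1.trans (le_ciSup (f := fun i' => ⨆ j', |M i' j'|) (Set.finite_range _).bddAbove i)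

lemma entryNorm_nonneg (M : Mat3) : 0 ≤ entryNorm M :=
  (abs_nonneg _).trans (entry_le_entryNorm M 0 0)

lemma transp_dot (M : Mat3) (x y : V3) : (Mᵀ *ᵥ x) ⬝ᵥ y = x ⬝ᵥ (M *ᵥ y) := by
  rw [mulVec_transpose, ← dotProduct_mulVec]

lemma comp_le {G E : Mat3} (hE : E * G * Eᵀ = 1) (v : V3) (b : Fin 3) :
    |v b| ≤ 3 * entryNorm E * Real.sqrt (quadG G v) := by
  set w : V3 := (E * G) *ᵥ v with hw
  have hrev : Eᵀ * (E * G) = 1 := by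
    rw [mul_eq_one_comm]; exact hE
  have hv : Eᵀ *ᵥ w = v := by
    rw [hw, mulVec_mulVec, hrev, one_mulVec]
  have h3 : quadG G v = w ⬝ᵥ w := by
    have h4 : (Eᵀ *ᵥ w) ⬝ᵥ (G *ᵥ (Eᵀ *ᵥ w)) = w ⬝ᵥ ((E * G * Eᵀ) *ᵥ w) := by
      rw [transp_dot]
      congr 1
      rw [mulVec_mulVec, mulVec_mulVec]
    rw [hE, one_mulVec] at h4
    rw [quadG, ← hv]; exact h4
  have hwi : ∀ i : Fin 3, |w i| ≤ Real.sqrt (quadG G v) := by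
    intro i
    have hle : w i ^ 2 ≤ w ⬝ᵥ w := by
      rw [dotProduct]
      have : w i ^ 2 = w i * w i := sq (w i)
      rw [this]
      exact Finset.single_le_sum (f := fun j => w j * w j)
        (fun j _ => mul_self_nonneg _) (Finset.mem_univ i)
    calc |w i| = Real.sqrt (w i ^ 2) := (Real.sqrt_sq_eq_abs _).symm
      _ ≤ Real.sqrt (quadG G v) := Real.sqrt_le_sqrt (by rw [h3]; exact hle)
  calc |v b| = |∑ i, Eᵀ b i * w i| := by rw [← hv]; rfl
    _ ≤ ∑ i, |Eᵀ b i * w i| := Finset.abs_sum_le_sum_abs _ _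
    _ ≤ ∑ _i : Fin 3, entryNorm E * Real.sqrt (quadG G v) := by
        refine Finset.sum_le_sum fun i _ => ?_
        rw [abs_mul, transpose_apply]
        exact mul_le_mul (entry_le_entryNorm E i b) (hwi i) (abs_nonneg _)
          (entryNorm_nonneg E)
    _ = 3 * entryNorm E * Real.sqrt (quadG G v) := by
        simp [Finset.sum_const]; ring

lemma mulVec_entry_bound {G E : Mat3} (hE : E * G * Eᵀ = 1) (v : V3) (a : Fin 3) :
    |(G *ᵥ v) a| ≤ 9 * entryNorm G * entryNorm E * Real.sqrt (quadG G v) := by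
  calc |(G *ᵥ v) a| = |∑ b, G a b * v b| := by rfl
    _ ≤ ∑ b, |G a b * v b| := Finset.abs_sum_le_sum_abs _ _
    _ ≤ ∑ _b : Fin 3, entryNorm G * (3 * entryNorm E * Real.sqrt (quadG G v)) := by
        refine Finset.sum_le_sum fun b _ => ?_
        rw [abs_mul]
        exact mul_le_mul (entry_le_entryNorm G a b) (comp_le hE v b) (abs_nonneg _)
          (entryNorm_nonneg G)
    _ = 9 * entryNorm G * entryNorm E * Real.sqrt (quadG G v) := by
        simp [Finset.sum_const]; ring

lemma quad_smul (G : Mat3) (c : ℝ) (u : V3) : quadG G (c • u) = c ^ 2 * quadG G u := by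
  simp only [quadG, mulVec_smul, dotProduct_smul, smul_dotProduct, smul_eq_mul]
  ring

lemma quad_key {G : Mat3} (hG : G.PosDef) (p q : V3) :
    quadG G (p0 G q • p - p0 G p • q)
      ≤ (-(p0 G p - p0 G q) ^ 2 + quadG G (p - q)) * (p0 G p * p0 G q) := by
  set P := p0 G p
  set Q := p0 G q
  have hsub : Q • p - P • q = Q • p + (-P) • q := by
    simp [sub_eq_add_neg, neg_smul]
  have hexp : quadG G (Q • p - P • q)
      = Q ^ 2 * quadG G p + (-P) * (2 * (Q * (q ⬝ᵥ G *ᵥ p))) + P ^ 2 * quadG G q := by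
    rw [hsub]
    have := quad_expand hG.isHermitian (Q • p) q (-P)
    rw [quad_smul] at this
    simpa [mulVec_smul, dotProduct_smul, smul_eq_mul] using this
  have h2 : quadG G (p - q) = quadG G p - 2 * (q ⬝ᵥ G *ᵥ p) + quadG G q := by
    have := quad_expand hG.isHermitian p q (-1)
    rw [show p + (-1:ℝ) • q = p - q from by simp [sub_eq_add_neg]] at this
    linarith
  have hp := p0_sq hG p
  have hq := p0_sq hG q
  nlinarith [sq_nonneg (P - Q), hexp, h2, hp, hq]

lemma bound_D {G E : Mat3} (hG : G.PosDef) (hE : E * G * Eᵀ = 1) (p q : V3)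
    (hpos : 0 < hrel G p q) (a : Fin 3) :
    |p0 G q / hrel G p q * ((G *ᵥ p) a / p0 G p - (G *ᵥ q) a / p0 G q)|
      ≤ 9 * p0 G q * Real.sqrt (p0 G p * p0 G q) * entryNorm G * entryNorm E := by
  set P := p0 G p with hPdef
  set Q := p0 G q with hQdef
  set H := hrel G p q with hHdef
  set v' : V3 := Q • p - P • q with hv'
  have hPpos : 0 < P := p0_pos hG p
  have hQpos : 0 < Q := p0_pos hG q
  have hPQpos : 0 < P * Q := mul_pos hPpos hQpos
  have hPQ1 : (1:ℝ) ≤ P * Q := by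
    have := mul_le_mul (one_le_p0 hG p) (one_le_p0 hG q) zero_le_one hPpos.le
    linarith
  have hI0 : 0 < -(P - Q) ^ 2 + quadG G (p - q) := by
    have := hpos; rw [hHdef, hrel] at this; exact Real.sqrt_pos.mp this
  have hH2 : H ^ 2 = -(P - Q) ^ 2 + quadG G (p - q) := by
    rw [hHdef, hrel]; exact Real.sq_sqrt hI0.le
  -- component formula
  have hGv : (G *ᵥ v') a = Q * (G *ᵥ p) a - P * (G *ᵥ q) a := by
    rw [hv']
    simp [Matrix.mulVec_sub, mulVec_smul, Pi.sub_apply, Pi.smul_apply, smul_eq_mul]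
  have hD : (G *ᵥ p) a / P - (G *ᵥ q) a / Q = (G *ᵥ v') a / (P * Q) := by
    rw [hGv]; field_simp
  -- quadratic bound
  have hquad : quadG G v' ≤ H ^ 2 * (P * Q) := by
    rw [hH2]; exact quad_key hG p q
  have hsq : Real.sqrt (quadG G v') ≤ H * Real.sqrt (P * Q) := by
    have h1 : Real.sqrt (quadG G v') ≤ Real.sqrt (H ^ 2 * (P * Q)) :=
      Real.sqrt_le_sqrt hquad
    rwa [Real.sqrt_mul (sq_nonneg H), Real.sqrt_sq hpos.le] at h1
  have hEnG := entryNorm_nonneg G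
  have hEnE := entryNorm_nonneg E
  have hGvabs : |(G *ᵥ v') a| ≤ 9 * entryNorm G * entryNorm E * (H * Real.sqrt (P * Q)) := by
    refine (mulVec_entry_bound hE v' a).trans ?_
    exact mul_le_mul_of_nonneg_left hsq (by positivity)
  have habs : |Q / H * ((G *ᵥ p) a / P - (G *ᵥ q) a / Q)|
      = Q / H * (|(G *ᵥ v') a| / (P * Q)) := by
    rw [hD, abs_mul, abs_div, abs_div, abs_of_pos hQpos, abs_of_pos hpos, abs_of_pos hPQpos]
  rw [habs]
  have hHne : H ≠ 0 := hpos.ne'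
  calc Q / H * (|(G *ᵥ v') a| / (P * Q))
      ≤ Q / H * ((9 * entryNorm G * entryNorm E * (H * Real.sqrt (P * Q))) / (P * Q)) := by
        gcongr
    _ = 9 * Q * (Real.sqrt (P * Q) / (P * Q)) * entryNorm G * entryNorm E := by
        field_simp
    _ ≤ 9 * Q * Real.sqrt (P * Q) * entryNorm G * entryNorm E := by
        have step3 : Real.sqrt (P * Q) / (P * Q) ≤ Real.sqrt (P * Q) :=
          div_le_self (Real.sqrt_nonneg _) hPQ1
        exact mul_le_mul_of_nonneg_right (mul_le_mul_of_nonneg_right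
          (mul_le_mul_of_nonneg_left step3 (by positivity)) hEnG) hEnE

lemma single_dot (u : V3) (a : Fin 3) : (Pi.single a 1 : V3) ⬝ᵥ u = u a := by
  simp [dotProduct, Pi.single_apply]

lemma bound_D' {G E : Mat3} (hG : G.PosDef) (hE : E * G * Eᵀ = 1) (p q : V3)
    (hpos : 0 < hrel G p q) (a : Fin 3) :
    |p0 G q / Real.sqrt (sCM G p q) * ((G *ᵥ p) a / p0 G p - (G *ᵥ q) a / p0 G q)|
      ≤ 9 * p0 G q * Real.sqrt (p0 G p * p0 G q) * entryNorm G * entryNorm E := by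
  refine le_trans ?_ (bound_D hG hE p q hpos a)
  rw [abs_mul, abs_mul]
  refine mul_le_mul_of_nonneg_right ?_ (abs_nonneg _)
  have hQpos : 0 < p0 G q := p0_pos hG q
  have hSpos : 0 < Real.sqrt (sCM G p q) := Real.sqrt_pos.mpr (sCM_pos hG p q hpos)
  rw [abs_div, abs_div, abs_of_pos hQpos, abs_of_pos hpos, abs_of_pos hSpos]
  exact div_le_div_of_nonneg_left hQpos.le hpos (hrel_le_sqrt_sCM hG p q)

end S3


/-- on the set where `h > 0`, `p ↦ h` and `p ↦ √s` are differentiable with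
`∂h/∂p_a = (q⁰/h)(p^a/p⁰ − q^a/q⁰)` and `∂√s/∂p_a = (q⁰/√s)(p^a/p⁰ − q^a/q⁰)`, and there is
an absolute constant `C` such that for every orthonormal frame `E` for `G` (i.e. `E G Eᵀ = 1`),
`|∂h/∂p_a| ≤ C q⁰ √(p⁰q⁰) ‖g⁻¹‖ ‖e⁻¹‖` and `|∂√s/∂p_a| ≤ C q⁰ √(p⁰q⁰) ‖g⁻¹‖ ‖e⁻¹‖`. -/
theorem stmt3 :
    ∃ C > (0 : ℝ), ∀ (G : Mat3), G.PosDef → ∀ q p : V3, 0 < hrel G p q → ∀ a : Fin 3,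
      HasDerivAt (fun t : ℝ => hrel G (p + t • (Pi.single a 1 : V3)) q)
        (p0 G q / hrel G p q * ((G *ᵥ p) a / p0 G p - (G *ᵥ q) a / p0 G q)) 0 ∧
      HasDerivAt (fun t : ℝ => Real.sqrt (sCM G (p + t • (Pi.single a 1 : V3)) q))
        (p0 G q / Real.sqrt (sCM G p q) * ((G *ᵥ p) a / p0 G p - (G *ᵥ q) a / p0 G q)) 0 ∧
      ∀ E : Mat3, E * G * Eᵀ = 1 →
        |p0 G q / hrel G p q * ((G *ᵥ p) a / p0 G p - (G *ᵥ q) a / p0 G q)|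
          ≤ C * p0 G q * Real.sqrt (p0 G p * p0 G q) * entryNorm G * entryNorm E ∧
        |p0 G q / Real.sqrt (sCM G p q) * ((G *ᵥ p) a / p0 G p - (G *ᵥ q) a / p0 G q)|
          ≤ C * p0 G q * Real.sqrt (p0 G p * p0 G q) * entryNorm G * entryNorm E := by
  refine ⟨9, by norm_num, fun G hG q p hpos a => ?_⟩
  have hdp : (Pi.single a 1 : V3) ⬝ᵥ G *ᵥ p = (G *ᵥ p) a := S3.single_dot _ a
  have hdq : (Pi.single a 1 : V3) ⬝ᵥ G *ᵥ q = (G *ᵥ q) a := S3.single_dot _ a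
  refine ⟨?_, ?_, fun E hE => ⟨S3.bound_D hG hE p q hpos a, S3.bound_D' hG hE p q hpos a⟩⟩
  · have h := S3.hasDerivAt_hrel hG p q (Pi.single a 1) hpos
    rwa [hdp, hdq] at h
  · have h := S3.hasDerivAt_sqrt_sCM hG p q (Pi.single a 1) hpos
    rwa [hdp, hdq] at h
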